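/- Let x_1 ≤ x_2 ≤ ⋯ ≤ x_n be ordered reals with mean μ = (1/n)∑ x_i. Then for any index k ∈ {1,...,n}: (1/n²) ∑_{i=k}^n ∑_{j=1}^i (1/3)|x_i − x_j| ≤ (1/n) ∑_{i=k}^n |x_i − μ|. -/

import Mathlib

open Finset

lemma tail_avg_aux (n k : ℕ) (f : ℕ → ℝ) (hk1 : 1 ≤ k) (hkn : k ≤ n)
    (h0 : ∀ i ∈ Icc 1 n, 0 ≤ f i)
    (hm : ∀ i j, 1 ≤ i → i ≤ j → j ≤ n → f i ≤ f j) :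
    ((n - k + 1 : ℕ) : ℝ) * ∑ i ∈ Icc 1 n, f i ≤ (n : ℝ) * ∑ i ∈ Icc k n, f i := by
  have hsplit : ∑ i ∈ Icc 1 n, f i = (∑ i ∈ Icc 1 (k-1), f i) + ∑ i ∈ Icc k n, f i := by
    have h1 : Icc 1 n = Ioc 0 n := by
      ext i; simp [Nat.lt_iff_add_one_le]
    have h2 : Icc 1 (k-1) = Ioc 0 (k-1) := by
      ext i; simp [Nat.lt_iff_add_one_le]
    have h3 : Icc k n = Ioc (k-1) n := by
      ext i; simp only [mem_Icc, mem_Ioc]; omega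
    rw [h1, h2, h3, Finset.sum_Ioc_consecutive]
    · omega
    · omega
  have hhead : ∑ i ∈ Icc 1 (k-1), f i ≤ ((k-1 : ℕ) : ℝ) * f k := by
    have := Finset.sum_le_card_nsmul (Icc 1 (k-1)) f (f k)
      (fun i hi => by
        simp only [mem_Icc] at hi
        exact hm i k hi.1 (by omega) hkn)
    simpa [Nat.card_Icc, nsmul_eq_mul] using this
  have htail : ((n - k + 1 : ℕ) : ℝ) * f k ≤ ∑ i ∈ Icc k n, f i := by
    have h := Finset.card_nsmul_le_sum (Icc k n) f (f k)
      (fun i hi => by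
        simp only [mem_Icc] at hi
        exact hm k i hk1 hi.1 hi.2)
    rw [Nat.card_Icc, nsmul_eq_mul] at h
    have he : n + 1 - k = n - k + 1 := by omega
    rwa [he] at h
  have hfk : 0 ≤ f k := h0 k (mem_Icc.mpr ⟨hk1, hkn⟩)
  have htail0 : 0 ≤ ∑ i ∈ Icc k n, f i := by
    apply Finset.sum_nonneg
    intro i hi
    rw [mem_Icc] at hi
    exact h0 i (mem_Icc.mpr ⟨le_trans hk1 hi.1, hi.2⟩)
  have hcast : ((n - k + 1 : ℕ) : ℝ) + ((k - 1 : ℕ) : ℝ) = n := by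
    have h : (n - k + 1) + (k - 1) = n := by omega
    rw [← Nat.cast_add, h]
  rw [hsplit]
  have h1 : ((n - k + 1 : ℕ) : ℝ) * ∑ i ∈ Icc 1 (k-1), f i
      ≤ ((k-1 : ℕ) : ℝ) * ∑ i ∈ Icc k n, f i := by
    calc ((n - k + 1 : ℕ) : ℝ) * ∑ i ∈ Icc 1 (k-1), f i
        ≤ ((n - k + 1 : ℕ) : ℝ) * (((k-1 : ℕ) : ℝ) * f k) := by
          apply mul_le_mul_of_nonneg_left hhead (by positivity)
      _ = ((k-1 : ℕ) : ℝ) * (((n - k + 1 : ℕ) : ℝ) * f k) := by ring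
      _ ≤ ((k-1 : ℕ) : ℝ) * ∑ i ∈ Icc k n, f i := by
          apply mul_le_mul_of_nonneg_left htail (by positivity)
  nlinarith [h1, htail0]

/-- For sorted reals `x₁ ≤ ⋯ ≤ xₙ` with mean `μ` and any index `k`,
`(1/n²) ∑_{i=k}^n ∑_{j=1}^i (1/3)|xᵢ − xⱼ| ≤ (1/n) ∑_{i=k}^n |xᵢ − μ|`. -/
theorem stmt5 (n : ℕ) (x : ℕ → ℝ)
    (hmono : ∀ i j, 1 ≤ i → i ≤ j → j ≤ n → x i ≤ x j)
    (k : ℕ) (hk1 : 1 ≤ k) (hkn : k ≤ n) :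
    (1 / (n : ℝ) ^ 2) * ∑ i ∈ Finset.Icc k n, ∑ j ∈ Finset.Icc 1 i, (1 / 3) * |x i - x j|
      ≤ (1 / (n : ℝ)) *
        ∑ i ∈ Finset.Icc k n, |x i - (∑ j ∈ Finset.Icc 1 n, x j) / (n : ℝ)| := by
  have hn1 : 1 ≤ n := le_trans hk1 hkn
  have hn : (0:ℝ) < n := by exact_mod_cast hn1
  set μ : ℝ := (∑ j ∈ Icc 1 n, x j) / n with hμ
  set S : ℝ := ∑ j ∈ Icc 1 n, |x j - μ| with hS
  set P : ℝ := ∑ j ∈ Icc 1 n, max (x j - μ) 0 with hP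
  set T : ℝ := ∑ i ∈ Icc k n, |x i - μ| with hT
  -- sum of deviations is zero
  have hsum0 : ∑ j ∈ Icc 1 n, (x j - μ) = 0 := by
    rw [Finset.sum_sub_distrib, Finset.sum_const]
    have hc : (Icc 1 n).card = n := by simp [Nat.card_Icc]
    rw [hc, nsmul_eq_mul, hμ]
    field_simp
    ring
  -- S = 2P
  have hS2P : S = 2 * P := by
    have habs : ∀ a : ℝ, |a| = 2 * max a 0 - a := by
      intro a
      rcases le_total a 0 with h | h
      · rw [abs_of_nonpos h, max_eq_right h]; ring
      · rw [abs_of_nonneg h, max_eq_left h]; ring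
    rw [hS]
    calc ∑ j ∈ Icc 1 n, |x j - μ|
        = ∑ j ∈ Icc 1 n, (2 * max (x j - μ) 0 - (x j - μ)) := by
          apply Finset.sum_congr rfl; intro j _; exact habs _
      _ = 2 * P - ∑ j ∈ Icc 1 n, (x j - μ) := by
          rw [Finset.sum_sub_distrib, ← Finset.mul_sum, hP]
      _ = 2 * P := by rw [hsum0]; ring
  -- tail bound: (n-k+1) * P ≤ n * T
  have hmP : ((n - k + 1 : ℕ) : ℝ) * P ≤ (n : ℝ) * T := by
    have := tail_avg_aux n k (fun i => max (x i - μ) 0) hk1 hkn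
      (fun i _ => le_max_right _ _)
      (fun i j hi hij hj => max_le_max (by linarith [hmono i j hi hij hj]) le_rfl)
    have h2 : ∑ i ∈ Icc k n, max (x i - μ) 0 ≤ T := by
      apply Finset.sum_le_sum
      intro i _
      exact max_le (le_abs_self _) (abs_nonneg _)
    calc ((n - k + 1 : ℕ) : ℝ) * P ≤ (n : ℝ) * ∑ i ∈ Icc k n, max (x i - μ) 0 := this
      _ ≤ (n : ℝ) * T := by apply mul_le_mul_of_nonneg_left h2 (le_of_lt hn)
  -- pointwise bound on inner sums
  have hinner : ∀ i ∈ Icc k n,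
      ∑ j ∈ Icc 1 i, |x i - x j| ≤ (n : ℝ) * |x i - μ| + S := by
    intro i hi
    simp only [mem_Icc] at hi
    have step1 : ∑ j ∈ Icc 1 i, |x i - x j|
        ≤ ∑ j ∈ Icc 1 i, (|x i - μ| + |x j - μ|) := by
      apply Finset.sum_le_sum
      intro j _
      calc |x i - x j| = |(x i - μ) + (μ - x j)| := by ring_nf
        _ ≤ |x i - μ| + |μ - x j| := abs_add_le _ _
        _ = |x i - μ| + |x j - μ| := by rw [abs_sub_comm μ (x j)]
    have step2 : ∑ j ∈ Icc 1 i, (|x i - μ| + |x j - μ|)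
        = (i : ℝ) * |x i - μ| + ∑ j ∈ Icc 1 i, |x j - μ| := by
      rw [Finset.sum_add_distrib, Finset.sum_const]
      have : (Icc 1 i).card = i := by simp [Nat.card_Icc]
      rw [this, nsmul_eq_mul]
    have step3 : (i : ℝ) * |x i - μ| ≤ (n : ℝ) * |x i - μ| := by
      apply mul_le_mul_of_nonneg_right _ (abs_nonneg _)
      exact_mod_cast hi.2
    have step4 : ∑ j ∈ Icc 1 i, |x j - μ| ≤ S := by
      rw [hS]
      apply Finset.sum_le_sum_of_subset_of_nonneg
      · apply Finset.Icc_subset_Icc le_rfl hi.2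
      · intro j _ _; exact abs_nonneg _
    linarith
  -- total double sum bound
  have hA : ∑ i ∈ Icc k n, ∑ j ∈ Icc 1 i, |x i - x j|
      ≤ (n : ℝ) * T + ((n - k + 1 : ℕ) : ℝ) * S := by
    calc ∑ i ∈ Icc k n, ∑ j ∈ Icc 1 i, |x i - x j|
        ≤ ∑ i ∈ Icc k n, ((n : ℝ) * |x i - μ| + S) := Finset.sum_le_sum hinner
      _ = (n : ℝ) * T + ((n - k + 1 : ℕ) : ℝ) * S := by
          rw [Finset.sum_add_distrib, ← Finset.mul_sum, Finset.sum_const]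
          have : (Icc k n).card = n - k + 1 := by
            rw [Nat.card_Icc]; omega
          rw [this, nsmul_eq_mul, hT]
  have hA3 : ∑ i ∈ Icc k n, ∑ j ∈ Icc 1 i, |x i - x j| ≤ 3 * (n : ℝ) * T := by
    have : ((n - k + 1 : ℕ) : ℝ) * S = 2 * (((n - k + 1 : ℕ) : ℝ) * P) := by
      rw [hS2P]; ring
    nlinarith [hA, hmP]
  -- finish
  have hfactor : ∑ i ∈ Icc k n, ∑ j ∈ Icc 1 i, (1/3 : ℝ) * |x i - x j|
      = (1/3 : ℝ) * ∑ i ∈ Icc k n, ∑ j ∈ Icc 1 i, |x i - x j| := by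
    rw [Finset.mul_sum]
    apply Finset.sum_congr rfl
    intro i _
    rw [Finset.mul_sum]
  rw [hfactor]
  have key : (1/3 : ℝ) * ∑ i ∈ Icc k n, ∑ j ∈ Icc 1 i, |x i - x j| ≤ (n : ℝ) * T := by
    linarith [hA3]
  calc (1 / (n:ℝ)^2) * ((1/3 : ℝ) * ∑ i ∈ Icc k n, ∑ j ∈ Icc 1 i, |x i - x j|)
      ≤ (1 / (n:ℝ)^2) * ((n : ℝ) * T) := by
        apply mul_le_mul_of_nonneg_left key (by positivity)
    _ = (1 / (n:ℝ)) * T := by field_simp
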